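/- Let K = {k_1 > k_2 > ⋯ > k_r} ⊆ {1,…,n} and let E_{k_i} be elementary factors of a lower triangular matrix A. Then E_{k_1} E_{k_2} ⋯ E_{k_r} = I + ∑_{∅ ≠ J ⊆ K} G(J), where G({j}) = C_j and for |J| ≥ 2 with elements j_1 > ⋯ > j_s, G(J) = a_{j_1,j_2} a_{j_2,j_3} ⋯ a_{j_{s−1},j_s} · C_{j_1} L^{j_1 − j_s}. -/

import Mathlib

/-- The elementary factor `E_k` of `A`. -/
def elemFactor {n : ℕ} (A : Matrix (Fin n) (Fin n) ℂ) (k : Fin n) :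
    Matrix (Fin n) (Fin n) ℂ :=
  Matrix.of fun i j => if j = k then A i j else if i = j then 1 else 0

/-- `C_k = E_k - I`. -/
def Ck {n : ℕ} (A : Matrix (Fin n) (Fin n) ℂ) (k : Fin n) :
    Matrix (Fin n) (Fin n) ℂ :=
  elemFactor A k - 1

/-- The lower shift matrix `L`, with `L_{k+1,k} = 1`. -/
def shiftL (n : ℕ) : Matrix (Fin n) (Fin n) ℂ :=
  Matrix.of fun i j => if (i : ℕ) = (j : ℕ) + 1 then 1 else 0

/-- `G(J)`: for `J = {j₁ > j₂ > ⋯ > jₛ}` nonempty,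
`G(J) = a_{j₁,j₂} ⋯ a_{j_{s-1},j_s} • C_{j₁} L^{j₁ - j_s}` (so `G({j}) = C_j`). -/
noncomputable def GFun {n : ℕ} (A : Matrix (Fin n) (Fin n) ℂ) (J : Finset (Fin n)) :
    Matrix (Fin n) (Fin n) ℂ :=
  match (J.sort (· ≤ ·)).reverse with
  | [] => 0
  | h :: t =>
      (((h :: t).zip t).map fun p => A p.1 p.2).prod •
        (Ck A h *
          shiftL n ^ ((h : ℕ) - (((h :: t).getLast (List.cons_ne_nil _ _)) : ℕ)))

lemma Ck_apply {n : ℕ} (A : Matrix (Fin n) (Fin n) ℂ) (k i j : Fin n) :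
    Ck A k i j = if j = k then (A i k - if i = k then 1 else 0) else 0 := by
  simp only [Ck, elemFactor, Matrix.sub_apply, Matrix.of_apply, Matrix.one_apply]
  split
  · rename_i h; subst h
    by_cases hik : i = j <;> simp [hik, eq_comm]
  · rename_i h
    by_cases hij : i = j
    · subst hij; simp [h]
    · simp [hij, fun h' : j = i => hij h'.symm]

lemma shiftL_pow_apply {n : ℕ} (m : ℕ) (i l : Fin n) :
    (shiftL n ^ m) i l = if (i : ℕ) = (l : ℕ) + m then 1 else 0 := by
  induction m generalizing i l with
  | zero => simp [Matrix.one_apply, Fin.ext_iff]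
  | succ m ih =>
    rw [pow_succ', Matrix.mul_apply]
    have key : ∀ b : Fin n, shiftL n i b * (shiftL n ^ m) b l
        = if ((i : ℕ) = (b : ℕ) + 1 ∧ (b : ℕ) = (l : ℕ) + m) then 1 else 0 := by
      intro b
      rw [show shiftL n i b = if (i : ℕ) = (b : ℕ) + 1 then 1 else 0 from rfl, ih]
      split <;> split <;> simp_all
    simp only [key]
    by_cases h : (i : ℕ) = (l : ℕ) + (m + 1)
    · have hx : (l : ℕ) + m < n := by omega
      rw [Finset.sum_eq_single (⟨(l : ℕ) + m, hx⟩ : Fin n)]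
      · simp [h]; omega
      · intro b _ hb
        rw [if_neg]
        rintro ⟨h1, h2⟩
        exact hb (Fin.ext h2)
      · intro hi; exact absurd (Finset.mem_univ _) hi
    · rw [Finset.sum_eq_zero, if_neg h]
      intro b _
      rw [if_neg]
      rintro ⟨h1, h2⟩
      omega

lemma Ck_mul_apply {n : ℕ} (A : Matrix (Fin n) (Fin n) ℂ) (k : Fin n)
    (M : Matrix (Fin n) (Fin n) ℂ) (i l : Fin n) :
    (Ck A k * M) i l = (A i k - if i = k then 1 else 0) * M k l := by
  rw [Matrix.mul_apply]
  have key : ∀ b : Fin n, Ck A k i b * M b l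
      = if b = k then (A i k - if i = k then 1 else 0) * M b l else 0 := by
    intro b
    rw [Ck_apply]
    split <;> simp
  simp only [key, Finset.sum_ite_eq' Finset.univ k, Finset.mem_univ, if_true]

lemma Ck_mul_Ck {n : ℕ} (A : Matrix (Fin n) (Fin n) ℂ) {j k : Fin n}
    (h : (j : ℕ) < (k : ℕ)) :
    Ck A k * Ck A j = A k j • (Ck A k * shiftL n ^ ((k : ℕ) - (j : ℕ))) := by
  ext i l
  rw [Ck_mul_apply, Matrix.smul_apply, Ck_mul_apply, Ck_apply, shiftL_pow_apply]
  have hkj : k ≠ j := by intro e; rw [e] at h; omega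
  have key : ((k : ℕ) = (l : ℕ) + ((k : ℕ) - (j : ℕ))) ↔ l = j := by
    rw [Fin.ext_iff]; omega
  by_cases hl : l = j
  · subst hl
    have hj : (k : ℕ) = (l : ℕ) + ((k : ℕ) - (l : ℕ)) := by omega
    rw [if_pos rfl, if_pos hj, if_neg hkj]
    simp [smul_eq_mul]
    ring
  · simp [hl, key]

noncomputable def GList {n : ℕ} (A : Matrix (Fin n) (Fin n) ℂ) :
    List (Fin n) → Matrix (Fin n) (Fin n) ℂ
  | [] => 0
  | h :: t =>
      (((h :: t).zip t).map fun p => A p.1 p.2).prod •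
        (Ck A h *
          shiftL n ^ ((h : ℕ) - (((h :: t).getLast (List.cons_ne_nil _ _)) : ℕ)))

lemma GFun_eq_GList {n : ℕ} (A : Matrix (Fin n) (Fin n) ℂ) (J : Finset (Fin n)) :
    GFun A J = GList A ((J.sort (· ≤ ·)).reverse) := by
  unfold GFun GList
  rfl

lemma GList_singleton {n : ℕ} (A : Matrix (Fin n) (Fin n) ℂ) (k : Fin n) :
    GList A [k] = Ck A k := by
  simp [GList]

lemma sort_insert_max {n : ℕ} {a : Fin n} {s : Finset (Fin n)}
    (h : ∀ x ∈ s, x < a) :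
    (insert a s).sort (· ≤ ·) = s.sort (· ≤ ·) ++ [a] := by
  have ha : a ∉ s := fun hx => lt_irrefl a (h a hx)
  refine (fun hp hs => List.Perm.eq_of_pairwise' (Finset.pairwise_sort _ _) hs hp) ?_ ?_
  · rw [← Multiset.coe_eq_coe]
    simp only [Finset.sort_eq]
    rw [show ((Finset.sort s (· ≤ ·) ++ [a] : List (Fin n)) : Multiset (Fin n))
        = (Finset.sort s (· ≤ ·) : Multiset (Fin n)) + ([a] : List (Fin n)) from rfl]
    simp [Finset.sort_eq, Finset.insert_val_of_notMem ha]
    rw [add_comm, Multiset.singleton_add]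
  · rw [List.pairwise_append]
    refine ⟨Finset.pairwise_sort _ _, List.pairwise_singleton _ _, ?_⟩
    intro x hx y hy
    rw [List.mem_singleton] at hy
    subst hy
    exact le_of_lt (h x (Finset.mem_sort (· ≤ ·) |>.mp hx))

lemma GList_cons {n : ℕ} (A : Matrix (Fin n) (Fin n) ℂ) (a b : Fin n)
    (t : List (Fin n)) (hab : (b : ℕ) < (a : ℕ))
    (hlast : (((b :: t).getLast (List.cons_ne_nil _ _)) : ℕ) ≤ (b : ℕ)) :
    GList A (a :: b :: t) = Ck A a * GList A (b :: t) := by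
  have hgl : (a :: b :: t).getLast (List.cons_ne_nil _ _)
      = (b :: t).getLast (List.cons_ne_nil _ _) := List.getLast_cons _
  simp only [GList, List.zip_cons_cons, List.map_cons, List.prod_cons, hgl]
  rw [mul_smul_comm, ← mul_assoc, Ck_mul_Ck A hab, smul_mul_assoc, mul_assoc, ← pow_add,
      tsub_add_tsub_cancel (le_of_lt hab) hlast, smul_smul, mul_comm]

lemma GFun_singleton {n : ℕ} (A : Matrix (Fin n) (Fin n) ℂ) (a : Fin n) :
    GFun A {a} = Ck A a := by
  rw [GFun_eq_GList, Finset.sort_singleton]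
  simpa using GList_singleton A a

lemma GFun_insert {n : ℕ} (A : Matrix (Fin n) (Fin n) ℂ) (a : Fin n)
    (J : Finset (Fin n)) (hJ : J.Nonempty) (h : ∀ x ∈ J, x < a) :
    GFun A (insert a J) = Ck A a * GFun A J := by
  rw [GFun_eq_GList, GFun_eq_GList, sort_insert_max h, List.reverse_append,
      List.reverse_singleton, List.singleton_append]
  obtain ⟨b, t, hbt⟩ : ∃ b t, (J.sort (· ≤ ·)).reverse = b :: t := by
    rcases hc : (J.sort (· ≤ ·)).reverse with _ | ⟨b, t⟩
    · exfalso
      have h1 : J.sort (· ≤ ·) = [] := by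
        rw [← List.reverse_reverse (J.sort (· ≤ ·)), hc]; rfl
      have h2 := Finset.length_sort (α := Fin n) (· ≤ ·) (s := J)
      rw [h1] at h2
      simp only [List.length_nil] at h2
      exact hJ.ne_empty (Finset.card_eq_zero.mp h2.symm)
    · exact ⟨b, t, rfl⟩
  rw [hbt]
  have hmem : ∀ x ∈ b :: t, x ∈ J := by
    intro x hx
    rw [← hbt, List.mem_reverse, Finset.mem_sort] at hx
    exact hx
  have hpair : List.Pairwise (fun x y : Fin n => y ≤ x) (b :: t) := by
    rw [← hbt, List.pairwise_reverse]
    exact Finset.pairwise_sort J (· ≤ ·)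
  have hb_ge : ∀ x ∈ t, x ≤ b := (List.pairwise_cons.mp hpair).1
  have hab : (b : ℕ) < (a : ℕ) := h b (hmem b List.mem_cons_self)
  have hlast : (((b :: t).getLast (List.cons_ne_nil _ _)) : ℕ) ≤ (b : ℕ) := by
    have hm := List.getLast_mem (l := b :: t) (List.cons_ne_nil _ _)
    rcases List.mem_cons.mp hm with he | ht
    · rw [he]
    · exact hb_ge _ ht
  exact GList_cons A a b t hab hlast

theorem stmt13 {n : ℕ} (A : Matrix (Fin n) (Fin n) ℂ)
    (hlow : ∀ i j : Fin n, i < j → A i j = 0) (K : Finset (Fin n)) :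
    ((K.sort (· ≤ ·)).reverse.map (elemFactor A)).prod =
      1 + ∑ J ∈ K.powerset.erase ∅, GFun A J := by
  induction K using Finset.induction_on_max with
  | empty => simp
  | insert a s ha ih =>
    have ha' : a ∉ s := fun hx => lt_irrefl a (ha a hx)
    rw [sort_insert_max ha, List.reverse_append, List.reverse_singleton,
        List.singleton_append, List.map_cons, List.prod_cons, ih]
    have hE : elemFactor A a = 1 + Ck A a := by simp [Ck]
    set S := ∑ J ∈ s.powerset.erase ∅, GFun A J with hS
    -- decompose the RHS sum
    have hdisj : Disjoint (s.powerset.erase ∅) (s.powerset.image (insert a)) := by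
      rw [Finset.disjoint_left]
      intro J hJ hJ'
      have h1 : J ⊆ s := Finset.mem_powerset.mp (Finset.mem_of_mem_erase hJ)
      obtain ⟨J', _, rfl⟩ := Finset.mem_image.mp hJ'
      exact ha' (h1 (Finset.mem_insert_self a J'))
    have hsplit : (insert a s).powerset.erase ∅
        = (s.powerset.erase ∅) ∪ s.powerset.image (insert a) := by
      have hne : (∅ : Finset (Fin n)) ∉ s.powerset.image (insert a) := by
        intro hmem
        obtain ⟨J', _, hJ'⟩ := Finset.mem_image.mp hmem
        exact (Finset.insert_ne_empty a J') hJ'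
      rw [Finset.powerset_insert, Finset.erase_union_distrib,
          Finset.erase_eq_of_notMem hne]
    rw [hsplit, Finset.sum_union hdisj]
    have himg : ∑ J ∈ s.powerset.image (insert a), GFun A J
        = ∑ J ∈ s.powerset, GFun A (insert a J) := by
      rw [Finset.sum_image]
      intro J1 h1 J2 h2 he
      have n1 : a ∉ J1 := fun hx => ha' (Finset.mem_powerset.mp h1 hx)
      have n2 : a ∉ J2 := fun hx => ha' (Finset.mem_powerset.mp h2 hx)
      rw [← Finset.erase_insert n1, ← Finset.erase_insert n2, he]
    have hsum2 : ∑ J ∈ s.powerset, GFun A (insert a J)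
        = Ck A a + Ck A a * S := by
      rw [← Finset.add_sum_erase _ _ (Finset.empty_mem_powerset s)]
      congr 1
      · simpa using GFun_singleton A a
      · rw [Finset.mul_sum]
        apply Finset.sum_congr rfl
        intro J hJ
        have hne : J ≠ ∅ := Finset.ne_of_mem_erase hJ
        have hsub : J ⊆ s := Finset.mem_powerset.mp (Finset.mem_of_mem_erase hJ)
        exact GFun_insert A a J (Finset.nonempty_iff_ne_empty.mpr hne)
          (fun x hx => ha x (hsub hx))
    rw [himg, hsum2, hE]
    noncomm_ring
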